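/- Let J be a compact interval, ν ∈ (0,1), and let f : J → ℝ be a twice differentiable map with f(J) ⊆ J and 0 < Df(x) ≤ ν for all x ∈ J, and suppose |Nf(x)| ≤ C₁ for all x ∈ J, where Nf = D²f/Df. Then for every k ≥ 1 and every x ∈ J, |D²f^k(x)| ≤ (C₁/(1 − ν)) · ν^k. In particular, the second derivatives of the iterates f^k converge uniformly to 0 as k → ∞. -/

import Mathlib

open Set

/-- Decay of second derivatives of iterates: if `0 < Df ≤ ν < 1` and `|Nf| ≤ C₁` on the
compact invariant interval `J = [a,b]`, then `|D²f^k(x)| ≤ (C₁/(1−ν)) · ν^k` for all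
`k ≥ 1` and `x ∈ J`; in particular `D²f^k → 0` uniformly.  Here
`Df^k(x) = ∏_{j<k} f'(fʲ(x))` and `d = D²f^k(x)`. -/
theorem second_derivative_of_iterates_tendsto_zero
    (a b ν C₁ : ℝ) (hab : a < b) (hν : ν ∈ Set.Ioo (0:ℝ) 1)
    (f f' f'' : ℝ → ℝ)
    (hmaps : Set.MapsTo f (Set.Icc a b) (Set.Icc a b))
    (hd1 : ∀ x ∈ Set.Icc a b, HasDerivAt f (f' x) x)
    (hd2 : ∀ x ∈ Set.Icc a b, HasDerivAt f' (f'' x) x)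
    (hpos : ∀ x ∈ Set.Icc a b, 0 < f' x)
    (hle : ∀ x ∈ Set.Icc a b, f' x ≤ ν)
    (hN : ∀ x ∈ Set.Icc a b, |f'' x / f' x| ≤ C₁) :
    ∀ k : ℕ, 1 ≤ k → ∀ x ∈ Set.Icc a b,
      HasDerivAt (f^[k]) (∏ j ∈ Finset.range k, f' (f^[j] x)) x ∧
      ∃ d : ℝ,
        HasDerivAt (fun y => ∏ j ∈ Finset.range k, f' (f^[j] y)) d x ∧
        |d| ≤ C₁ / (1 - ν) * ν ^ k := by
  obtain ⟨hν0, hν1⟩ := hν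
  have h1ν : (0:ℝ) < 1 - ν := by linarith
  have hC₁ : 0 ≤ C₁ := le_trans (abs_nonneg _) (hN a ⟨le_refl a, hab.le⟩)
  set M : ℝ := C₁ / (1 - ν) with hM
  have hM0 : 0 ≤ M := div_nonneg hC₁ h1ν.le
  have hMC : C₁ = M * (1 - ν) := by
    rw [hM, div_mul_cancel₀ _ (ne_of_gt h1ν)]
  have hf'' : ∀ x ∈ Set.Icc a b, |f'' x| ≤ C₁ * ν := by
    intro x hx
    have h2 := hpos x hx
    have heq : |f'' x| = |f'' x / f' x| * f' x := by
      rw [abs_div, abs_of_pos h2, div_mul_cancel₀ _ (ne_of_gt h2)]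
    rw [heq]
    exact mul_le_mul (hN x hx) (hle x hx) h2.le hC₁
  have hprod_pos : ∀ (k : ℕ) (x : ℝ), x ∈ Set.Icc a b →
      0 < ∏ j ∈ Finset.range k, f' (f^[j] x) := by
    intro k x hx
    exact Finset.prod_pos fun j _ => hpos _ (hmaps.iterate j hx)
  have hprod_le : ∀ (k : ℕ) (x : ℝ), x ∈ Set.Icc a b →
      ∏ j ∈ Finset.range k, f' (f^[j] x) ≤ ν ^ k := by
    intro k x hx
    calc ∏ j ∈ Finset.range k, f' (f^[j] x)
        ≤ ∏ j ∈ Finset.range k, ν :=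
          Finset.prod_le_prod (fun j _ => (hpos _ (hmaps.iterate j hx)).le)
            (fun j _ => hle _ (hmaps.iterate j hx))
      _ = ν ^ k := by simp
  suffices H : ∀ k : ℕ, ∀ x ∈ Set.Icc a b,
      HasDerivAt (f^[k+1]) (∏ j ∈ Finset.range (k+1), f' (f^[j] x)) x ∧
      ∃ d : ℝ,
        HasDerivAt (fun y => ∏ j ∈ Finset.range (k+1), f' (f^[j] y)) d x ∧
        |d| ≤ M * ν ^ (k+1) by
    intro k hk x hx
    obtain ⟨n, rfl⟩ : ∃ n, k = n + 1 := ⟨k - 1, (Nat.succ_pred_eq_of_pos hk).symm⟩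
    exact H n x hx
  intro k
  induction k with
  | zero =>
    intro x hx
    simp only [zero_add, Function.iterate_one, Finset.range_one, Finset.prod_singleton,
      Function.iterate_zero, id_eq]
    refine ⟨hd1 x hx, f'' x, hd2 x hx, ?_⟩
    have h1 := hf'' x hx
    have : C₁ * ν ≤ M * ν ^ 1 := by
      rw [pow_one, hMC]
      nlinarith [mul_nonneg (mul_nonneg hM0 hν0.le) hν0.le]
    linarith
  | succ k ih =>
    intro x hx
    have hfx : f x ∈ Set.Icc a b := hmaps hx
    obtain ⟨hD, d, hd, hdb⟩ := ih (f x) hfx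
    have hprod_eq : ∀ y : ℝ, ∏ j ∈ Finset.range (k+2), f' (f^[j] y)
        = (∏ j ∈ Finset.range (k+1), f' (f^[j] (f y))) * f' y := by
      intro y
      rw [Finset.prod_range_succ']
      simp [Function.iterate_succ_apply]
    constructor
    · have := hD.comp x (hd1 x hx)
      rw [← Function.iterate_succ] at this
      rw [hprod_eq x]
      exact this
    · set P : ℝ := ∏ j ∈ Finset.range (k+1), f' (f^[j] (f x)) with hP
      refine ⟨d * f' x * f' x + P * f'' x, ?_, ?_⟩
      · have h1 : HasDerivAt (fun y => ∏ j ∈ Finset.range (k+1), f' (f^[j] (f y)))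
            (d * f' x) x := hd.comp x (hd1 x hx)
        have h2 : HasDerivAt (fun y => (∏ j ∈ Finset.range (k+1), f' (f^[j] (f y))) * f' y)
            (d * f' x * f' x + P * f'' x) x := h1.mul (hd2 x hx)
        have hfun : (fun y => (∏ j ∈ Finset.range (k+1), f' (f^[j] (f y))) * f' y)
            = fun y => ∏ j ∈ Finset.range (k+2), f' (f^[j] y) := by
          funext y; rw [hprod_eq y]
        rwa [hfun] at h2
      · have hPpos : 0 < P := hprod_pos (k+1) (f x) hfx
        have hPle : P ≤ ν ^ (k+1) := hprod_le (k+1) (f x) hfx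
        have hfp := hpos x hx
        have hfl := hle x hx
        have hfpp := hf'' x hx
        have habs : |d * f' x * f' x + P * f'' x| ≤ |d| * f' x * f' x + P * |f'' x| := by
          calc |d * f' x * f' x + P * f'' x| ≤ |d * f' x * f' x| + |P * f'' x| := abs_add_le _ _
            _ = |d| * f' x * f' x + P * |f'' x| := by
                rw [abs_mul, abs_mul, abs_mul, abs_of_pos hfp, abs_of_pos hPpos]
        have hstep : |d| * f' x * f' x + P * |f'' x|
            ≤ M * ν ^ (k+1) * ν * ν + ν ^ (k+1) * (C₁ * ν) := by
          gcongr
        have hfin : M * ν ^ (k+1) * ν * ν + ν ^ (k+1) * (C₁ * ν) = M * ν ^ (k+2) := by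
          rw [hMC]; ring
        calc |d * f' x * f' x + P * f'' x|
            ≤ |d| * f' x * f' x + P * |f'' x| := habs
          _ ≤ M * ν ^ (k+1) * ν * ν + ν ^ (k+1) * (C₁ * ν) := hstep
          _ = M * ν ^ (k+2) := hfin
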